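/- (Lemma 3.3.) Let P > 2 and define f₂ : ℝ → ℝ by f₂(B) = 1/2 − (1/2)·erf(√B − √P). Set ζ₁ = ((√P − √(P−2))/2)² and ζ₂ = ((√P + √(P−2))/2)². Then there exist real numbers τ₁ and τ₂ with 0 < τ₁ ≤ ζ₁ and τ₂ ≥ ζ₂ such that the whole graph of f₂ over [0, ∞) lies above the straight line through the points (τ₁, f₂(τ₁)) and (τ₂, f₂(τ₂)); that is, for every B ≥ 0, f₂(B) ≥ ((f₂(τ₂) − f₂(τ₁))/(τ₂ − τ₁))·(B − τ₁) + f₂(τ₁). -/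

import Mathlib

open MeasureTheory ProbabilityTheory Real Set

noncomputable def erf (x : ℝ) : ℝ :=
  (2 / Real.sqrt Real.pi) * ∫ t in (0:ℝ)..x, Real.exp (-t^2)

lemma erf_hasDerivAt (x : ℝ) :
    HasDerivAt erf (2 / Real.sqrt Real.pi * Real.exp (-x^2)) x := by
  have hc : Continuous fun t : ℝ => Real.exp (-t^2) := by continuity
  have h := intervalIntegral.integral_hasStrictDerivAt_right
    (hc.intervalIntegrable 0 x) (hc.stronglyMeasurableAtFilter _ _) hc.continuousAt
  exact (h.hasDerivAt.const_mul (2 / Real.sqrt Real.pi))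

lemma erf_neg (x : ℝ) : erf (-x) = - erf x := by
  unfold erf
  have : (∫ t in (0:ℝ)..(-x), Real.exp (-t^2)) = ∫ t in (0:ℝ)..(-x), Real.exp (-(-t)^2) := by
    simp [neg_sq]
  rw [this, intervalIntegral.integral_comp_neg (fun t => Real.exp (-t^2))]
  simp only [neg_neg, neg_zero]
  rw [intervalIntegral.integral_symm]
  ring

lemma erf_pos {x : ℝ} (hx : 0 < x) : 0 < erf x := by
  have hc : Continuous fun t : ℝ => Real.exp (-t^2) := by continuity
  have h1 : 0 < ∫ t in (0:ℝ)..x, Real.exp (-t^2) :=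
    intervalIntegral.intervalIntegral_pos_of_pos (hc.intervalIntegrable 0 x)
      (fun t => Real.exp_pos _) hx
  have h2 : 0 < 2 / Real.sqrt Real.pi := by positivity
  exact mul_pos h2 h1

lemma erf_nonneg {x : ℝ} (hx : 0 ≤ x) : 0 ≤ erf x := by
  rcases eq_or_lt_of_le hx with h | h
  · simp [erf, ← h]
  · exact (erf_pos h).le

lemma erf_continuous : Continuous erf :=
  (Differentiable.continuous (fun x => (erf_hasDerivAt x).differentiableAt))

noncomputable def dd (a B : ℝ) : ℝ :=
  -(Real.exp (-(Real.sqrt B - a)^2) / (2 * Real.sqrt Real.pi * Real.sqrt B))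

noncomputable def dd2 (a B : ℝ) : ℝ :=
  Real.exp (-(Real.sqrt B - a)^2) * (2*B - 2*a*Real.sqrt B + 1)
    / (4 * Real.sqrt Real.pi * B * Real.sqrt B)

lemma dd_neg (a : ℝ) {B : ℝ} (hB : 0 < B) : dd a B < 0 := by
  unfold dd
  have : 0 < Real.exp (-(Real.sqrt B - a)^2) / (2 * Real.sqrt Real.pi * Real.sqrt B) := by
    have h1 : (0:ℝ) < Real.sqrt Real.pi := Real.sqrt_pos.mpr Real.pi_pos
    have h2 : (0:ℝ) < Real.sqrt B := Real.sqrt_pos.mpr hB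
    positivity
  linarith

lemma dd_continuousOn (a : ℝ) : ContinuousOn (dd a) (Ioi 0) := by
  unfold dd
  apply ContinuousOn.neg
  apply ContinuousOn.div
  · exact (Real.continuous_exp.comp (by continuity)).continuousOn
  · exact (by continuity : Continuous fun B => 2 * Real.sqrt Real.pi * Real.sqrt B).continuousOn
  · intro x hx
    have h1 : (0:ℝ) < Real.sqrt Real.pi := Real.sqrt_pos.mpr Real.pi_pos
    have h2 : (0:ℝ) < Real.sqrt x := Real.sqrt_pos.mpr hx
    positivity

lemma f2_hasDerivAt (a : ℝ) {B : ℝ} (hB : 0 < B) :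
    HasDerivAt (fun B => 1/2 - 1/2 * erf (Real.sqrt B - a)) (dd a B) B := by
  have hπ : Real.sqrt Real.pi ≠ 0 := by positivity
  have hsB : Real.sqrt B ≠ 0 := by positivity
  have hs : HasDerivAt Real.sqrt (1/(2*Real.sqrt B)) B := Real.hasDerivAt_sqrt hB.ne'
  have h1 : HasDerivAt (fun B => Real.sqrt B - a) (1/(2*Real.sqrt B)) B := hs.sub_const a
  have h2 := ((erf_hasDerivAt (Real.sqrt B - a)).comp B h1).const_mul (1/2 : ℝ)
  have h3 := (h2.const_sub (1/2 : ℝ))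
  refine h3.congr_deriv ?_
  symm
  unfold dd
  field_simp

lemma dd_hasDerivAt (a : ℝ) {B : ℝ} (hB : 0 < B) :
    HasDerivAt (dd a) (dd2 a B) B := by
  have hπ : (0:ℝ) < Real.sqrt Real.pi := Real.sqrt_pos.mpr Real.pi_pos
  have hsB : (0:ℝ) < Real.sqrt B := Real.sqrt_pos.mpr hB
  have hss : Real.sqrt B * Real.sqrt B = B := Real.mul_self_sqrt hB.le
  have hs : HasDerivAt Real.sqrt (1/(2*Real.sqrt B)) B := Real.hasDerivAt_sqrt hB.ne'
  have h1 : HasDerivAt (fun B => Real.sqrt B - a) (1/(2*Real.sqrt B)) B := hs.sub_const a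
  have hnum : HasDerivAt (fun B => Real.exp (-(Real.sqrt B - a)^2))
      (Real.exp (-(Real.sqrt B - a)^2) * (-((2:ℕ) * (Real.sqrt B - a)^1 * (1/(2*Real.sqrt B))))) B :=
    ((h1.pow 2).neg).exp
  have hden : HasDerivAt (fun B => 2 * Real.sqrt Real.pi * Real.sqrt B)
      (2 * Real.sqrt Real.pi * (1/(2*Real.sqrt B))) B := hs.const_mul _
  have hdiv := (hnum.div hden (by positivity)).neg
  refine hdiv.congr_deriv ?_
  symm
  unfold dd2
  set s := Real.sqrt B with hsdef
  rw [← hss]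
  field_simp
  ring

lemma exp_tail (a R m : ℝ) (hR1 : 1 ≤ R) (ha : 0 ≤ a) (haR : a ≤ R) (hm : 0 < m)
    (h8 : 8 ≤ R * m) : (a + R) * Real.exp (-R^2) ≤ m := by
  have hR0 : (0:ℝ) < R := by linarith
  have hEpos : 0 < Real.exp (-R^2) := Real.exp_pos _
  have hFpos : 0 < Real.exp (R^2) := Real.exp_pos _
  have e0 : Real.exp (R^2) = Real.exp (R^2/2) * Real.exp (R^2/2) := by
    rw [← Real.exp_add]; ring_nf
  have e1 : R^4/4 ≤ Real.exp (R^2) := by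
    nlinarith [Real.add_one_le_exp (R^2/2), sq_nonneg R]
  have eEF : Real.exp (-R^2) * Real.exp (R^2) = 1 := by
    rw [← Real.exp_add]; simp
  have hE4 : Real.exp (-R^2) * R^4 ≤ 4 := by
    have h := mul_le_mul_of_nonneg_left e1 hEpos.le
    nlinarith [h, eEF]
  have hr2 : R^2 ≤ R^4 := by
    have h1 : 1 ≤ R^2 := by nlinarith
    nlinarith [mul_le_mul_of_nonneg_left h1 (by positivity : (0:ℝ) ≤ R^2)]
  have hR2E : Real.exp (-R^2) * R^2 ≤ 4 :=
    le_trans (mul_le_mul_of_nonneg_left hr2 hEpos.le) hE4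
  have h2RE : 2 * R * Real.exp (-R^2) ≤ m := by
    nlinarith [hR2E, h8, hR0, hEpos]
  nlinarith [hEpos, haR, h2RE]

set_option maxHeartbeats 2000000 in
theorem stmt_7 (P : ℝ) (hP : 2 < P)
    (f₂ : ℝ → ℝ) (hf₂ : ∀ B, f₂ B = 1/2 - (1/2) * erf (Real.sqrt B - Real.sqrt P))
    (ζ₁ ζ₂ : ℝ)
    (hζ₁ : ζ₁ = ((Real.sqrt P - Real.sqrt (P - 2)) / 2)^2)
    (hζ₂ : ζ₂ = ((Real.sqrt P + Real.sqrt (P - 2)) / 2)^2) :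
    ∃ τ₁ τ₂ : ℝ, 0 < τ₁ ∧ τ₁ ≤ ζ₁ ∧ ζ₂ ≤ τ₂ ∧
      ∀ B : ℝ, 0 ≤ B →
        f₂ B ≥ ((f₂ τ₂ - f₂ τ₁) / (τ₂ - τ₁)) * (B - τ₁) + f₂ τ₁ := by
  have hfe : f₂ = fun B => 1/2 - 1/2 * erf (Real.sqrt B - Real.sqrt P) := by
    funext B; exact hf₂ B
  set a := Real.sqrt P with ha_def
  set r := Real.sqrt (P - 2) with hr_def
  set s₁ := (a - r) / 2 with hs₁_def
  set s₂ := (a + r) / 2 with hs₂_def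
  have haP : a^2 = P := Real.sq_sqrt (by linarith)
  have hrP : r^2 = P - 2 := Real.sq_sqrt (by linarith)
  have hr0 : 0 < r := Real.sqrt_pos.mpr (by linarith)
  have hra : r < a := by
    rw [ha_def, hr_def]; exact Real.sqrt_lt_sqrt (by linarith) (by linarith)
  have hs₁0 : 0 < s₁ := by rw [hs₁_def]; linarith
  have hs₂0 : 0 < s₂ := by rw [hs₂_def]; linarith
  have hs₁₂ : s₁ < s₂ := by rw [hs₁_def, hs₂_def]; linarith
  have hζ₁' : ζ₁ = s₁^2 := hζ₁
  have hζ₂' : ζ₂ = s₂^2 := hζ₂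
  have hζ₁0 : 0 < ζ₁ := by rw [hζ₁']; positivity
  have hζ₂0 : 0 < ζ₂ := by rw [hζ₂']; positivity
  have hζ₁₂ : ζ₁ < ζ₂ := by rw [hζ₁', hζ₂']; nlinarith
  have hsqζ₁ : Real.sqrt ζ₁ = s₁ := by rw [hζ₁']; exact Real.sqrt_sq hs₁0.le
  have hsqζ₂ : Real.sqrt ζ₂ = s₂ := by rw [hζ₂']; exact Real.sqrt_sq hs₂0.le
  have hπ : (0:ℝ) < Real.sqrt Real.pi := Real.sqrt_pos.mpr Real.pi_pos
  -- basic analytic facts about f₂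
  have hcont : Continuous f₂ := by
    rw [hfe]
    exact continuous_const.sub (continuous_const.mul
      (erf_continuous.comp ((Real.continuous_sqrt).sub continuous_const)))
  have hfd : ∀ B : ℝ, 0 < B → HasDerivAt f₂ (dd a B) B := by
    intro B hB; rw [hfe]; exact f2_hasDerivAt a hB
  have hanti : ∀ x y : ℝ, 0 ≤ x → x ≤ y → f₂ y ≤ f₂ x := by
    have h := strictAntiOn_of_deriv_neg (convex_Ici 0) hcont.continuousOn
      (fun x hx => by
        rw [interior_Ici] at hx
        rw [(hfd x hx).deriv]
        exact dd_neg a hx)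
    intro x y hx hxy
    rcases eq_or_lt_of_le hxy with rfl | h'
    · exact le_refl _
    · exact (h (mem_Ici.mpr hx) (mem_Ici.mpr (le_trans hx hxy)) h').le
  -- factorization of the second-derivative numerator
  have hfact : ∀ x : ℝ, 0 ≤ x →
      2*x - 2*a*Real.sqrt x + 1 = 2*(Real.sqrt x - s₁)*(Real.sqrt x - s₂) := by
    intro x hx
    have hxx : Real.sqrt x ^ 2 = x := Real.sq_sqrt hx
    rw [hs₁_def, hs₂_def]
    nlinarith [hxx, haP, hrP]
  -- convexity structure
  have hconv1 : ConvexOn ℝ (Icc 0 ζ₁) f₂ := by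
    apply convexOn_of_hasDerivWithinAt2_nonneg (convex_Icc 0 ζ₁) hcont.continuousOn
      (f' := dd a) (f'' := dd2 a)
    · intro x hx
      rw [interior_Icc] at hx
      exact (hfd x hx.1).hasDerivWithinAt
    · intro x hx
      rw [interior_Icc] at hx
      exact (dd_hasDerivAt a hx.1).hasDerivWithinAt
    · intro x hx
      rw [interior_Icc] at hx
      have hx0 : 0 < x := hx.1
      have hsx : Real.sqrt x < s₁ := by
        rw [← hsqζ₁]; exact Real.sqrt_lt_sqrt hx0.le hx.2
      have hQ : 0 ≤ 2*x - 2*a*Real.sqrt x + 1 := by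
        rw [hfact x hx0.le]
        have h := mul_nonneg (by linarith : (0:ℝ) ≤ s₁ - Real.sqrt x)
          (by linarith : (0:ℝ) ≤ s₂ - Real.sqrt x)
        nlinarith [h]
      unfold dd2
      have hsx0 : 0 < Real.sqrt x := Real.sqrt_pos.mpr hx0
      apply div_nonneg (mul_nonneg (Real.exp_pos _).le hQ) (by positivity)
  have hconc : ConcaveOn ℝ (Icc ζ₁ ζ₂) f₂ := by
    apply concaveOn_of_hasDerivWithinAt2_nonpos (convex_Icc ζ₁ ζ₂) hcont.continuousOn
      (f' := dd a) (f'' := dd2 a)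
    · intro x hx
      rw [interior_Icc] at hx
      exact (hfd x (lt_trans hζ₁0 hx.1)).hasDerivWithinAt
    · intro x hx
      rw [interior_Icc] at hx
      exact (dd_hasDerivAt a (lt_trans hζ₁0 hx.1)).hasDerivWithinAt
    · intro x hx
      rw [interior_Icc] at hx
      have hx0 : 0 < x := lt_trans hζ₁0 hx.1
      have hsx1 : s₁ < Real.sqrt x := by
        rw [← hsqζ₁]; exact Real.sqrt_lt_sqrt hζ₁0.le hx.1
      have hsx2 : Real.sqrt x < s₂ := by
        rw [← hsqζ₂]; exact Real.sqrt_lt_sqrt hx0.le hx.2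
      have hQ : 2*x - 2*a*Real.sqrt x + 1 ≤ 0 := by
        rw [hfact x hx0.le]
        have h := mul_nonneg (by linarith : (0:ℝ) ≤ Real.sqrt x - s₁)
          (by linarith : (0:ℝ) ≤ s₂ - Real.sqrt x)
        nlinarith [h]
      unfold dd2
      have hsx0 : 0 < Real.sqrt x := Real.sqrt_pos.mpr hx0
      apply div_nonpos_of_nonpos_of_nonneg
        (mul_nonpos_of_nonneg_of_nonpos (Real.exp_pos _).le hQ) (by positivity)
  have hconv2 : StrictConvexOn ℝ (Ici ζ₂) f₂ := by
    apply strictConvexOn_of_deriv2_pos (convex_Ici ζ₂) hcont.continuousOn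
    intro x hx
    rw [interior_Ici] at hx
    have hx0 : 0 < x := lt_trans hζ₂0 hx
    have h1 : deriv f₂ =ᶠ[nhds x] dd a := by
      filter_upwards [Ioi_mem_nhds hx0] with y hy using (hfd y hy).deriv
    have h2 : deriv^[2] f₂ x = dd2 a x := by
      have : deriv^[2] f₂ x = deriv (deriv f₂) x := rfl
      rw [this, h1.deriv_eq, (dd_hasDerivAt a hx0).deriv]
    rw [h2]
    have hsx2 : s₂ < Real.sqrt x := by
      rw [← hsqζ₂]; exact Real.sqrt_lt_sqrt hζ₂0.le hx
    have hQ : 0 < 2*x - 2*a*Real.sqrt x + 1 := by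
      rw [hfact x hx0.le]
      have h := mul_pos (by linarith : (0:ℝ) < Real.sqrt x - s₁)
        (by linarith : (0:ℝ) < Real.sqrt x - s₂)
      nlinarith [h]
    unfold dd2
    have hsx0 : 0 < Real.sqrt x := Real.sqrt_pos.mpr hx0
    apply div_pos (mul_pos (Real.exp_pos _) hQ) (by positivity)
  -- the modified slope function, globally continuous
  set g : ℝ → ℝ := fun c => dd a (max c ζ₂) with hg_def
  have hg_eq : ∀ c : ℝ, ζ₂ ≤ c → g c = dd a c := by
    intro c hc; rw [hg_def]; simp [max_eq_left hc]
  have hg_cont : Continuous g := by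
    apply (dd_continuousOn a).comp_continuous (continuous_id.max continuous_const)
    intro x; exact lt_of_lt_of_le hζ₂0 (le_max_right x ζ₂)
  -- the set of admissible tangent points
  set S : Set ℝ := {c : ℝ | ζ₂ ≤ c ∧ ∀ B ∈ Icc (0:ℝ) ζ₂, f₂ c + g c * (B - c) ≤ f₂ B}
    with hS_def
  have hSclosed : IsClosed S := by
    have : S = Ici ζ₂ ∩ ⋂ B ∈ Icc (0:ℝ) ζ₂, {c | f₂ c + g c * (B - c) ≤ f₂ B} := by
      ext c
      simp only [hS_def, mem_setOf_eq, mem_inter_iff, mem_Ici, mem_iInter]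
    rw [this]
    refine isClosed_Ici.inter (isClosed_biInter fun B _ => ?_)
    exact isClosed_le (hcont.add (hg_cont.mul (continuous_const.sub continuous_id)))
      continuous_const
  have hSbdd : BddBelow S := ⟨ζ₂, fun c hc => hc.1⟩
  have hSne : S.Nonempty := by
    set δ := erf s₁ with hδ_def
    have hδ0 : 0 < δ := erf_pos hs₁0
    have ha0 : 0 ≤ a := Real.sqrt_nonneg P
    set R := max (max 1 a) (8 / (Real.sqrt Real.pi * δ)) with hR_def
    have hR1 : (1:ℝ) ≤ R := le_trans (le_max_left 1 a) (le_max_left _ _)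
    have hRa : a ≤ R := le_trans (le_max_right 1 a) (le_max_left _ _)
    have hR8 : 8 / (Real.sqrt Real.pi * δ) ≤ R := le_max_right _ _
    have h8 : 8 ≤ R * (Real.sqrt Real.pi * δ) :=
      (div_le_iff₀ (by positivity)).mp hR8
    have hR0 : 0 < R := lt_of_lt_of_le one_pos hR1
    have haR : 0 < a + R := by linarith
    have hsc : Real.sqrt ((a + R)^2) = a + R := Real.sqrt_sq haR.le
    have hc0 : 0 < (a + R)^2 := by positivity
    have hcζ₂ : ζ₂ ≤ (a + R)^2 := by
      rw [hζ₂']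
      have hs₂a : s₂ ≤ a + R := by rw [hs₂_def]; linarith
      exact pow_le_pow_left₀ hs₂0.le hs₂a 2
    refine ⟨(a + R)^2, hcζ₂, ?_⟩
    intro B hB
    rw [hg_eq _ hcζ₂]
    have hdc : dd a ((a + R)^2) < 0 := dd_neg a hc0
    have step1 : dd a ((a + R)^2) * (B - (a + R)^2) ≤ dd a ((a + R)^2) * (0 - (a + R)^2) :=
      mul_le_mul_of_nonpos_left (by linarith [hB.1]) hdc.le
    have key : f₂ ((a + R)^2) + dd a ((a + R)^2) * (0 - (a + R)^2)
        = 1/2 - 1/2 * erf R + (a + R) * Real.exp (-R^2) / (2 * Real.sqrt Real.pi) := by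
      rw [hf₂ ((a + R)^2)]
      unfold dd
      rw [hsc, show a + R - a = R from by ring]
      field_simp
      ring
    have hfζ₂ : f₂ ζ₂ = 1/2 + 1/2 * δ := by
      rw [hf₂ ζ₂, hsqζ₂, show s₂ - a = -s₁ from by rw [hs₂_def, hs₁_def]; ring,
        erf_neg, hδ_def]
      ring
    have hfin : (a + R) * Real.exp (-R^2) ≤ Real.sqrt Real.pi * δ :=
      exp_tail a R _ hR1 ha0 hRa (by positivity) h8
    have hdiv : (a + R) * Real.exp (-R^2) / (2 * Real.sqrt Real.pi)
        ≤ (Real.sqrt Real.pi * δ) / (2 * Real.sqrt Real.pi) := by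
      gcongr
    have hdiv2 : (Real.sqrt Real.pi * δ) / (2 * Real.sqrt Real.pi) = δ / 2 := by
      field_simp
    have herfR : 0 ≤ erf R := erf_nonneg (by linarith)
    have step2 : f₂ ((a + R)^2) + dd a ((a + R)^2) * (0 - (a + R)^2) ≤ f₂ ζ₂ := by
      rw [key, hfζ₂]
      linarith only [hdiv, hdiv2, herfR]
    have step3 : f₂ ζ₂ ≤ f₂ B := hanti B ζ₂ hB.1 hB.2
    linarith only [step1, step2, step3]
  set c₀ := sInf S with hc₀_def
  have hc₀S : c₀ ∈ S := hSclosed.csInf_mem hSne hSbdd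
  have hc₀ : ζ₂ ≤ c₀ := hc₀S.1
  have hc₀0 : 0 < c₀ := lt_of_lt_of_le hζ₂0 hc₀
  set sl := dd a c₀ with hsl_def
  have hsl_neg : sl < 0 := dd_neg a hc₀0
  set T : ℝ → ℝ := fun B => f₂ c₀ + sl * (B - c₀) with hT_def
  have hTcont : Continuous T := by
    rw [hT_def]
    exact continuous_const.add (continuous_const.mul (continuous_id.sub continuous_const))
  have hTd : ∀ x : ℝ, HasDerivAt T sl x := by
    intro x
    rw [hT_def]
    simpa using (((hasDerivAt_id x).sub_const c₀).const_mul sl).const_add (f₂ c₀)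
  have hT1 : ∀ B ∈ Icc (0:ℝ) ζ₂, T B ≤ f₂ B := by
    intro B hB
    have := hc₀S.2 B hB
    rwa [hg_eq c₀ hc₀] at this
  have hT2 : ∀ B : ℝ, ζ₂ ≤ B → T B ≤ f₂ B := by
    intro B hB
    rcases lt_trichotomy B c₀ with h | h | h
    · have hs := hconv2.convexOn.slope_le_of_hasDerivAt (mem_Ici.mpr hB)
        (mem_Ici.mpr hc₀) h (hfd c₀ hc₀0)
      rw [slope_def_field, div_le_iff₀ (by linarith : (0:ℝ) < c₀ - B)] at hs
      have hr : sl * (B - c₀) = -(sl * (c₀ - B)) := by ring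
      rw [hT_def]
      simp only
      linarith
    · rw [hT_def, h]; simp
    · have hs := hconv2.convexOn.le_slope_of_hasDerivAt (mem_Ici.mpr hc₀)
        (mem_Ici.mpr hB) h (hfd c₀ hc₀0)
      rw [slope_def_field, le_div_iff₀ (by linarith : (0:ℝ) < B - c₀)] at hs
      rw [hT_def]
      simp only
      linarith
  have hT : ∀ B : ℝ, 0 ≤ B → T B ≤ f₂ B := by
    intro B hB
    rcases le_total B ζ₂ with h | h
    · exact hT1 B ⟨hB, h⟩
    · exact hT2 B h
  -- existence of a touching point in [0, ζ₁]
  have hbex : ∃ b ∈ Icc (0:ℝ) ζ₁, f₂ b = T b := by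
    rcases eq_or_lt_of_le hc₀ with hceq | hclt
    · -- c₀ = ζ₂ : touching at ζ₁ by concavity
      refine ⟨ζ₁, ⟨hζ₁0.le, le_refl ζ₁⟩, ?_⟩
      have hder : HasDerivAt f₂ sl ζ₂ := by
        rw [hceq]; exact hfd c₀ hc₀0
      have hs := hconc.le_slope_of_hasDerivAt (mem_Icc.mpr ⟨le_refl ζ₁, hζ₁₂.le⟩)
        (mem_Icc.mpr ⟨hζ₁₂.le, le_refl ζ₂⟩) hζ₁₂ hder
      rw [slope_def_field, le_div_iff₀ (by linarith : (0:ℝ) < ζ₂ - ζ₁)] at hs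
      have hTζ₁ : T ζ₁ = f₂ c₀ + sl * (ζ₁ - c₀) := by rw [hT_def]
      have hfc₀ : f₂ ζ₂ = f₂ c₀ := by rw [hceq]
      have h1 : f₂ ζ₁ ≤ T ζ₁ := by
        have hr : sl * (ζ₁ - c₀) + sl * (ζ₂ - ζ₁) = sl * (ζ₂ - c₀) := by ring
        have hc₀ζ₂ : sl * (ζ₂ - c₀) = 0 := by rw [← hceq]; ring
        linarith only [hs, hTζ₁, hfc₀, hr, hc₀ζ₂]
      exact le_antisymm h1 (hT1 ζ₁ ⟨hζ₁0.le, hζ₁₂.le⟩)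
    · -- ζ₂ < c₀
      by_contra hcon
      push_neg at hcon
      have hlt1 : ∀ x ∈ Icc (0:ℝ) ζ₁, T x < f₂ x := fun x hx =>
        lt_of_le_of_ne (hT1 x ⟨hx.1, le_trans hx.2 hζ₁₂.le⟩) (fun h => hcon x hx h.symm)
      have hltζ₂ : T ζ₂ < f₂ ζ₂ := by
        rcases lt_or_eq_of_le (hT1 ζ₂ ⟨hζ₂0.le, le_refl _⟩) with h | h
        · exact h
        · exfalso
          have hs := hconv2.slope_lt_of_hasDerivAt (mem_Ici.mpr (le_refl ζ₂))
            (mem_Ici.mpr hc₀) hclt (hfd c₀ hc₀0)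
          rw [slope_def_field, div_lt_iff₀ (by linarith : (0:ℝ) < c₀ - ζ₂)] at hs
          have hTζ₂ : T ζ₂ = f₂ c₀ + sl * (ζ₂ - c₀) := by rw [hT_def]
          have hr : sl * (ζ₂ - c₀) + sl * (c₀ - ζ₂) = 0 := by ring
          linarith only [hs, hTζ₂, h, hr]
      have hmid : ∀ x ∈ Icc ζ₁ ζ₂, T x < f₂ x := by
        intro x hx
        set μ := (ζ₂ - x)/(ζ₂ - ζ₁) with hμ
        set ν := (x - ζ₁)/(ζ₂ - ζ₁) with hν
        have hd : (0:ℝ) < ζ₂ - ζ₁ := by linarith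
        have hμ0 : 0 ≤ μ := div_nonneg (by linarith [hx.2]) hd.le
        have hν0 : 0 ≤ ν := div_nonneg (by linarith [hx.1]) hd.le
        have hμν : μ + ν = 1 := by rw [hμ, hν]; field_simp; ring
        have hx' : μ • ζ₁ + ν • ζ₂ = x := by
          simp only [smul_eq_mul]; rw [hμ, hν]; field_simp; ring
        have hcc := hconc.2 (mem_Icc.mpr ⟨le_refl ζ₁, hζ₁₂.le⟩)
          (mem_Icc.mpr ⟨hζ₁₂.le, le_refl ζ₂⟩) hμ0 hν0 hμν
        rw [hx'] at hcc
        simp only [smul_eq_mul] at hcc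
        have hx'' : x = μ * ζ₁ + ν * ζ₂ := by
          rw [← hx']; simp [smul_eq_mul]
        have hTx : T x = μ * T ζ₁ + ν * T ζ₂ := by
          rw [hT_def]
          simp only
          rw [hx'']
          linear_combination (sl * c₀ - f₂ c₀) * hμν
        have h1 : T ζ₁ < f₂ ζ₁ := hlt1 ζ₁ ⟨hζ₁0.le, le_refl _⟩
        have hpos : 0 < μ * (f₂ ζ₁ - T ζ₁) + ν * (f₂ ζ₂ - T ζ₂) := by
          rcases eq_or_lt_of_le hμ0 with h | h
          · have hν1 : ν = 1 := by linarith only [hμν, h]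
            rw [← h, hν1]
            simp
            linarith only [hltζ₂]
          · have p1 := mul_pos h (sub_pos.mpr h1)
            have p2 := mul_nonneg hν0 (sub_nonneg.mpr hltζ₂.le)
            linarith only [p1, p2]
        linarith only [hcc, hTx, hpos]
      have hall : ∀ x ∈ Icc (0:ℝ) ζ₂, T x < f₂ x := by
        intro x hx
        rcases le_total x ζ₁ with h | h
        · exact hlt1 x ⟨hx.1, h⟩
        · exact hmid x ⟨h, hx.2⟩
      obtain ⟨z, hz, hzmin⟩ := (isCompact_Icc (a := (0:ℝ)) (b := ζ₂)).exists_isMinOn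
        (nonempty_Icc.mpr hζ₂0.le) ((hcont.sub hTcont).continuousOn)
      set ε := f₂ z - T z with hε_def
      have hε0 : 0 < ε := sub_pos.mpr (hall z hz)
      set w : ℝ → ℝ := fun c => |(f₂ c - c * g c) - (f₂ c₀ - c₀ * g c₀)| + ζ₂ * |g c - g c₀|
        with hw_def
      have hwcont : Continuous w := by
        rw [hw_def]
        exact (((hcont.sub (continuous_id.mul hg_cont)).sub continuous_const).abs).add
          (continuous_const.mul ((hg_cont.sub continuous_const).abs))
      have hw0 : w c₀ = 0 := by rw [hw_def]; simp
      have hev1 : ∀ᶠ c in nhds c₀, w c < ε := by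
        have h := hwcont.continuousAt (x := c₀)
        rw [ContinuousAt, hw0] at h
        exact h.eventually (eventually_lt_nhds hε0)
      have hev2 : ∀ᶠ c in nhds c₀, ζ₂ < c := eventually_gt_nhds hclt
      obtain ⟨c, hc1, hc2⟩ :=
        (((hev1.and hev2).filter_mono nhdsWithin_le_nhds).and
          (eventually_mem_nhdsWithin (s := Iio c₀) (a := c₀))).exists
      obtain ⟨hcw, hcζ⟩ := hc1
      have hclt' : c < c₀ := hc2
      have hcS : c ∈ S := by
        refine ⟨hcζ.le, ?_⟩
        intro B hB
        have hgc₀ : g c₀ = sl := hg_eq c₀ hc₀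
        have hdiff : f₂ c + g c * (B - c) - T B
            = ((f₂ c - c * g c) - (f₂ c₀ - c₀ * g c₀)) + B * (g c - g c₀) := by
          rw [hT_def]
          simp only
          rw [hgc₀]
          ring
        have habs1 : ((f₂ c - c * g c) - (f₂ c₀ - c₀ * g c₀))
            ≤ |(f₂ c - c * g c) - (f₂ c₀ - c₀ * g c₀)| := le_abs_self _
        have habs2 : B * (g c - g c₀) ≤ ζ₂ * |g c - g c₀| := by
          calc B * (g c - g c₀) ≤ |B * (g c - g c₀)| := le_abs_self _
            _ = |B| * |g c - g c₀| := abs_mul _ _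
            _ ≤ ζ₂ * |g c - g c₀| := by
                have hBb : |B| ≤ ζ₂ := abs_le.mpr ⟨by linarith [hB.1, hζ₂0], hB.2⟩
                exact mul_le_mul_of_nonneg_right hBb (abs_nonneg _)
        have hεB : ε ≤ f₂ B - T B := hzmin hB
        have hwc : w c = |(f₂ c - c * g c) - (f₂ c₀ - c₀ * g c₀)| + ζ₂ * |g c - g c₀| := by
          rw [hw_def]
        linarith only [hdiff, habs1, habs2, hεB, hcw, hwc]
      have := csInf_le hSbdd hcS
      linarith only [this, hclt']
  obtain ⟨b, hbmem, hfb⟩ := hbex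
  -- the touching point is positive
  have hbpos : 0 < b := by
    rcases eq_or_lt_of_le hbmem.1 with hb0 | h
    · exfalso
      have hf0 : f₂ 0 = T 0 := by rw [← hb0] at hfb; exact hfb
      have hslpos : 0 < -sl := neg_pos.mpr hsl_neg
      set q := Real.exp (-P) / (2 * Real.sqrt Real.pi * (-sl)) with hq_def
      have hq0 : 0 < q := div_pos (Real.exp_pos _) (by positivity)
      set B₀ := min ζ₁ (min P (q^2/2)) with hB₀_def
      have hB₀0 : 0 < B₀ := lt_min hζ₁0 (lt_min (by linarith) (by positivity))
      have hB₀P : B₀ ≤ P := le_trans (min_le_right _ _) (min_le_left _ _)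
      have hB₀q : B₀ ≤ q^2/2 := le_trans (min_le_right _ _) (min_le_right _ _)
      have hB₀ζ₁ : B₀ ≤ ζ₁ := min_le_left _ _
      have hderlt : ∀ x ∈ Ioo (0:ℝ) B₀, dd a x - sl < 0 := by
        intro x hx
        have hx0 := hx.1
        have hsx0 : 0 < Real.sqrt x := Real.sqrt_pos.mpr hx0
        have hsxq : Real.sqrt x < q := by
          have hxq : x < q^2 := by
            have hq2 : 0 < q^2 := by positivity
            linarith only [hx.2, hB₀q, hq2]
          calc Real.sqrt x < Real.sqrt (q^2) := Real.sqrt_lt_sqrt hx0.le hxq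
            _ = q := Real.sqrt_sq hq0.le
        have hxa : Real.sqrt x ≤ a := by
          rw [ha_def]
          exact Real.sqrt_le_sqrt (by linarith [hx.2])
        have harg : (Real.sqrt x - a)^2 ≤ P := by
          have hexp2 : (Real.sqrt x - a)^2 = a^2 - Real.sqrt x * (2*a - Real.sqrt x) := by ring
          have hm := mul_nonneg (Real.sqrt_nonneg x)
            (by linarith only [hxa, hsx0] : (0:ℝ) ≤ 2*a - Real.sqrt x)
          linarith only [hexp2, haP, hm]
        have hexp : Real.exp (-P) ≤ Real.exp (-(Real.sqrt x - a)^2) :=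
          Real.exp_le_exp.mpr (by linarith)
        have h1 : Real.exp (-P) / (2*Real.sqrt Real.pi*Real.sqrt x)
            ≤ Real.exp (-(Real.sqrt x - a)^2) / (2*Real.sqrt Real.pi*Real.sqrt x) := by
          gcongr
        have h2 : Real.exp (-P) / (2*Real.sqrt Real.pi*q)
            < Real.exp (-P) / (2*Real.sqrt Real.pi*Real.sqrt x) := by
          apply div_lt_div_of_pos_left (Real.exp_pos _) (by positivity)
          have := mul_lt_mul_of_pos_left hsxq (by positivity : (0:ℝ) < 2*Real.sqrt Real.pi)
          linarith only [this]
        have h3 : Real.exp (-P) / (2*Real.sqrt Real.pi*q) = -sl := by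
          have hslne : sl ≠ 0 := ne_of_lt hsl_neg
          have hπne : Real.sqrt Real.pi ≠ 0 := ne_of_gt hπ
          have hexpne : Real.exp (-P) ≠ 0 := (Real.exp_pos _).ne'
          rw [hq_def]
          field_simp
        have h4 : -(Real.exp (-(Real.sqrt x - a)^2) / (2*Real.sqrt Real.pi*Real.sqrt x)) < sl := by
          linarith only [h1, h2, h3]
        show dd a x - sl < 0
        unfold dd
        linarith only [h4]
      obtain ⟨x, hxmem, hxeq⟩ := exists_hasDerivAt_eq_slope (fun y => f₂ y - T y)
        (fun y => dd a y - sl) hB₀0 ((hcont.sub hTcont).continuousOn)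
        (fun y hy => (hfd y hy.1).sub (hTd y))
      have hnum : 0 ≤ f₂ B₀ - T B₀ := sub_nonneg.mpr (hT B₀ hB₀0.le)
      have hzero : f₂ 0 - T 0 = 0 := by rw [hf0]; ring
      have hge : 0 ≤ dd a x - sl := by
        have : dd a x - sl = ((f₂ B₀ - T B₀) - (f₂ 0 - T 0)) / (B₀ - 0) := hxeq
        rw [this, hzero]
        apply div_nonneg (by linarith only [hnum]) (by linarith only [hB₀0])
      exact absurd hge (not_le.mpr (hderlt x hxmem))
    · exact h
  -- conclusion
  refine ⟨b, c₀, hbpos, hbmem.2, hc₀, ?_⟩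
  intro B hB
  have hbc : b < c₀ := lt_of_le_of_lt hbmem.2 (lt_of_lt_of_le hζ₁₂ hc₀)
  have hslope : (f₂ c₀ - f₂ b) / (c₀ - b) = sl := by
    rw [hfb, hT_def, div_eq_iff (by intro h; linarith [sub_eq_zero.mp h] : c₀ - b ≠ 0)]
    ring
  rw [hslope]
  have : sl * (B - b) + f₂ b = T B := by
    rw [hfb, hT_def]; ring
  rw [this]
  exact hT B hB
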